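/- For all a, b > 0 with a ≠ b, one has (4/9)·D(a,b) + (5/9)·H(a,b) < T(a,b). -/

import Mathlib

noncomputable def harmonicMean (a b : ℝ) : ℝ := 2 * a * b / (a + b)

noncomputable def seiffertT (a b : ℝ) : ℝ := (a - b) / (2 * Real.arctan ((a - b) / (a + b)))

noncomputable def contraD (a b : ℝ) : ℝ := (a ^ 3 + b ^ 3) / (a ^ 2 + b ^ 2)

section AuxKey
open Real Set


lemma denom_pos (x : ℝ) (hx1 : x ≤ 1) (hx0 : -1 ≤ x) : 0 < 9+12*x^2-5*x^4 := by
  have h : x^2 ≤ 1 := by nlinarith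
  nlinarith [sq_nonneg x, mul_nonneg (sq_nonneg x) (sub_nonneg.2 h)]

lemma keyderiv (x : ℝ) (hx : -1 ≤ x) (hx1 : x ≤ 1) :
    HasDerivAt (fun y : ℝ => 9*y*(1+y^2)/(9+12*y^2-5*y^4) - Real.arctan y)
      ((((9+27*x^2)*(9+12*x^2-5*x^4) - (9*x*(1+x^2))*(24*x-20*x^3)) / (9+12*x^2-5*x^4)^2) - 1/(1+x^2)) x := by
  have hd : (9:ℝ)+12*x^2-5*x^4 ≠ 0 := (denom_pos x hx1 hx).ne'
  have hN : HasDerivAt (fun y : ℝ => 9*y*(1+y^2)) (9+27*x^2) x := by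
    have h1 : HasDerivAt (fun y : ℝ => 9*y) 9 x := by
      simpa using (hasDerivAt_id x).const_mul 9
    have h2 : HasDerivAt (fun y : ℝ => 1+y^2) (2*x) x := by
      simpa using ((hasDerivAt_pow 2 x).const_add 1)
    have := h1.mul h2
    exact this.congr_deriv (by ring)
  have hD : HasDerivAt (fun y : ℝ => 9+12*y^2-5*y^4) (24*x-20*x^3) x := by
    have h2 : HasDerivAt (fun y : ℝ => 9+12*y^2) (24*x) x := by
      have := ((hasDerivAt_pow 2 x).const_mul 12).const_add 9
      exact this.congr_deriv (by norm_num; ring)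
    have h4 : HasDerivAt (fun y : ℝ => 5*y^4) (20*x^3) x := by
      have := (hasDerivAt_pow 4 x).const_mul 5
      exact this.congr_deriv (by norm_num; ring)
    exact h2.sub h4
  exact (hN.div hD hd).sub (Real.hasDerivAt_arctan x)

lemma key (t : ℝ) (ht0 : 0 < t) (ht1 : t < 1) :
    Real.arctan t < 9*t*(1+t^2)/(9+12*t^2-5*t^4) := by
  set f : ℝ → ℝ := fun y => 9*y*(1+y^2)/(9+12*y^2-5*y^4) - Real.arctan y with hf
  have hmono : StrictMonoOn f (Icc 0 1) := by
    apply strictMonoOn_of_deriv_pos (convex_Icc 0 1)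
    · apply ContinuousOn.sub
      · apply ContinuousOn.div (by fun_prop) (by fun_prop)
        intro x hx
        exact (denom_pos x hx.2 (by linarith [hx.1])).ne'
      · exact Real.continuous_arctan.continuousOn
    · intro x hx
      rw [interior_Icc] at hx
      rw [(keyderiv x (by linarith [hx.1]) (le_of_lt hx.2)).deriv]
      have hd := denom_pos x (le_of_lt hx.2) (by linarith [hx.1])
      rw [div_sub_div _ _ (by positivity) (by positivity)]
      apply div_pos
      · nlinarith [sq_nonneg x, pow_pos hx.1 4, pow_pos hx.1 6, pow_pos hx.1 8, sq_nonneg (x^2)]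
      · positivity
  have h0 : f 0 = 0 := by simp [hf]
  have : f 0 < f t := hmono (by constructor <;> norm_num) (by constructor <;> linarith) ht0
  rw [h0] at this
  simp only [hf] at this
  linarith

end AuxKey

lemma main' (a b : ℝ) (hb : 0 < b) (ha : 0 < a) (hlt : b < a) :
    (4 / 9) * contraD a b + (5 / 9) * harmonicMean a b < seiffertT a b := by
  set t : ℝ := (a - b) / (a + b) with htdef
  have hs : (0:ℝ) < a + b := by linarith
  have ht0 : 0 < t := div_pos (by linarith) hs
  have ht1 : t < 1 := by rw [htdef, div_lt_one hs]; linarith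
  have hA : 0 < Real.arctan t := by
    rw [← Real.arctan_zero]; exact Real.arctan_strictMono ht0
  set X : ℝ := (4 / 9) * contraD a b + (5 / 9) * harmonicMean a b with hXdef
  have hdne : (0:ℝ) < 9+12*t^2-5*t^4 := by
    nlinarith [sq_nonneg t, mul_nonneg (sq_nonneg t) (sub_nonneg.2 (by nlinarith : t^2 ≤ 1))]
  have hk' : Real.arctan t * (9+12*t^2-5*t^4) < 9*t*(1+t^2) := by
    have := key t ht0 ht1
    calc Real.arctan t * (9+12*t^2-5*t^4)
        < (9*t*(1+t^2)/(9+12*t^2-5*t^4)) * (9+12*t^2-5*t^4) :=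
          mul_lt_mul_of_pos_right this hdne
      _ = 9*t*(1+t^2) := div_mul_cancel₀ _ hdne.ne'
  have hX2 : X * (18*(1+t^2)) = (a+b)*(9+12*t^2-5*t^4) := by
    rw [hXdef, htdef, contraD, harmonicMean]
    have h1 : a + b ≠ 0 := hs.ne'
    have h2 : a^2 + b^2 ≠ 0 := by positivity
    field_simp
    ring
  have htd : a - b = (a+b)*t := by rw [htdef]; field_simp
  rw [seiffertT, ← htdef, lt_div_iff₀ (by positivity), htd]
  have h5 : 0 < 9*(1+t^2)*(9+12*t^2-5*t^4) := by positivity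
  have h6 : X*(2*Real.arctan t)*(9*(1+t^2)*(9+12*t^2-5*t^4))
      < ((a+b)*t)*(9*(1+t^2)*(9+12*t^2-5*t^4)) := by
    calc X*(2*Real.arctan t)*(9*(1+t^2)*(9+12*t^2-5*t^4))
        = (X*(18*(1+t^2))) * (Real.arctan t*(9+12*t^2-5*t^4)) := by ring
      _ = ((a+b)*(9+12*t^2-5*t^4)) * (Real.arctan t*(9+12*t^2-5*t^4)) := by rw [hX2]
      _ < ((a+b)*(9+12*t^2-5*t^4)) * (9*t*(1+t^2)) :=
          mul_lt_mul_of_pos_left hk' (mul_pos hs hdne)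
      _ = ((a+b)*t)*(9*(1+t^2)*(9+12*t^2-5*t^4)) := by ring
  exact (mul_lt_mul_iff_of_pos_right h5).1 h6

theorem stmt_1 (a b : ℝ) (ha : 0 < a) (hb : 0 < b) (hab : a ≠ b) :
    (4 / 9) * contraD a b + (5 / 9) * harmonicMean a b < seiffertT a b := by
  rcases hab.lt_or_gt with h | h
  · have hm := main' b a ha hb h
    have e1 : contraD b a = contraD a b := by rw [contraD, contraD]; ring_nf
    have e2 : harmonicMean b a = harmonicMean a b := by rw [harmonicMean, harmonicMean]; ring_nf
    have e3 : seiffertT b a = seiffertT a b := by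
      rw [seiffertT, seiffertT]
      have : (a - b) / (a + b) = -((b - a) / (b + a)) := by ring_nf
      rw [this, Real.arctan_neg]
      ring
    rwa [e1, e2, e3] at hm
  · exact main' a b hb ha h
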